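/- arXiv:1001.3868 — 2 statements merged into one kernel-verified Lean document; each statement's English description precedes it below -/
import Mathlib

section
/- Let $\kkk$ be an algebraically closed field and $f \in \kkk[t]$ a monic polynomial of degree $n$. If $f = t^n - a_1 t^{n-1} + \dots + (-1)^n a_n$, then the coordinate ring of the scheme $\Flag_f$ is $\kkk[t_1,\dots,t_n]/(e_1 - a_1, \dots, e_n - a_n)$ where $e_i$ is the $i$-th elementary symmetric polynomial in $t_1,\dots,t_n$, and this ring is a free $\kkk$-module of rank $n!$. -/
open Polynomial MvPolynomial

/-- Coefficients of `∏ (X - C sᵢ)` via elementary symmetric functions. -/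
lemma coeff_prod_X_sub_C {S : Type*} [CommRing S] {m : ℕ} (s : Fin m → S) {k : ℕ} (hk : k ≤ m) :
    (∏ i, (Polynomial.X - Polynomial.C (s i))).coeff k
      = (-1) ^ (m - k) * (Finset.univ.val.map s).esymm (m - k) := by
  have hcard : Multiset.card (Finset.univ.val.map s) = m := by simp
  have h := Multiset.prod_X_sub_C_coeff (Finset.univ.val.map s) (k := k) (by rw [hcard]; exact hk)
  rw [hcard] at h
  rw [← h]
  congr 1
  rw [Finset.prod_eq_multiset_prod, Multiset.map_map]
  rfl

lemma natDegree_prod_X_sub_C_le {S : Type*} [CommRing S] {m : ℕ} (s : Fin m → S) :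
    (∏ i, (Polynomial.X - Polynomial.C (s i))).natDegree ≤ m := by
  refine le_trans (Polynomial.natDegree_prod_le Finset.univ
    fun i => Polynomial.X - Polynomial.C (s i)) ?_
  have h : ∀ i ∈ (Finset.univ : Finset (Fin m)),
      (Polynomial.X - Polynomial.C (s i)).natDegree ≤ 1 :=
    fun i _ => Polynomial.natDegree_X_sub_C_le _
  have h2 : ∑ i : Fin m, (Polynomial.X - Polynomial.C (s i)).natDegree ≤ ∑ _i : Fin m, (1:ℕ) :=
    Finset.sum_le_sum h
  simpa using h2

/-- The key "Vieta bridge": the relations `eⱼ(s) = (-1)ʲ qⱼ` hold iff `∏ (X - C sᵢ)`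
equals the image of `q`. -/
lemma prod_X_sub_C_eq_map_iff {R S : Type*} [CommRing R] [CommRing S] {m : ℕ}
    (s : Fin m → S) (q : R[X]) (hq : q.Monic) (hdeg : q.natDegree = m) (φ : R →+* S) :
    (∏ i, (Polynomial.X - Polynomial.C (s i))) = q.map φ ↔
      ∀ i : Fin m, (Finset.univ.val.map s).esymm (i.1 + 1)
        = (-1) ^ (i.1 + 1) * φ (q.coeff (m - (i.1 + 1))) := by
  have hsq : ∀ j : ℕ, ((-1 : S) ^ j) * ((-1) ^ j) = 1 := by
    intro j; rw [← pow_add, ← two_mul, pow_mul]; simp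
  constructor
  · intro h i
    have hi : i.1 + 1 ≤ m := i.2
    have hmk : m - (m - (i.1 + 1)) = i.1 + 1 := by omega
    have := coeff_prod_X_sub_C s (k := m - (i.1 + 1)) (by omega)
    rw [h, Polynomial.coeff_map, hmk] at this
    calc (Finset.univ.val.map s).esymm (i.1 + 1)
        = ((-1 : S) ^ (i.1+1) * (-1) ^ (i.1+1)) * (Finset.univ.val.map s).esymm (i.1 + 1) := by
          rw [hsq]; ring
      _ = (-1) ^ (i.1 + 1) * φ (q.coeff (m - (i.1 + 1))) := by
          rw [mul_assoc, ← this]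
  · intro h
    ext k
    rcases lt_trichotomy k m with hk | hk | hk
    · have hmk : m - k = (m - k - 1) + 1 := by omega
      set i : Fin m := ⟨m - k - 1, by omega⟩ with hi
      have hik : m - (i.1 + 1) = k := by simp [hi]; omega
      rw [coeff_prod_X_sub_C s hk.le, Polynomial.coeff_map, hmk]
      have := h i
      simp only [hi] at this
      rw [this, hik, ← mul_assoc, hsq, one_mul]
    · subst hk
      have he0 : (Finset.univ.val.map s).esymm 0 = 1 := by
        simp [Multiset.esymm]
      rw [coeff_prod_X_sub_C s le_rfl, Nat.sub_self, pow_zero, one_mul, he0,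
        Polynomial.coeff_map, ← hdeg, hq.coeff_natDegree, map_one]
    · rw [Polynomial.coeff_eq_zero_of_natDegree_lt
          (lt_of_le_of_lt (natDegree_prod_X_sub_C_le s) hk),
        Polynomial.coeff_map, Polynomial.coeff_eq_zero_of_natDegree_lt (by omega), map_zero]

/-- The ideal of relations `eᵢ = (-1)^i fᵢ` cutting out `Flag_f`. -/
noncomputable def relIdeal (R : Type*) [CommRing R] (n : ℕ) (f : R[X]) : Ideal (MvPolynomial (Fin n) R) :=
  Ideal.span (Set.range fun i : Fin n =>
    MvPolynomial.esymm (Fin n) R (i.1 + 1)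
      - MvPolynomial.C ((-1) ^ (i.1 + 1) * f.coeff (n - (i.1 + 1))))

lemma eval₂Hom_esymm {A S : Type*} [CommRing A] [CommRing S] {σ : Type*} [Fintype σ] (φ : A →+* S) (v : σ → S) (j : ℕ) :
    eval₂Hom φ v (MvPolynomial.esymm σ A j) = (Finset.univ.val.map v).esymm j := by
  rw [MvPolynomial.esymm, Finset.esymm_map_val, map_sum]
  refine Finset.sum_congr rfl fun t _ => ?_
  rw [map_prod]
  exact Finset.prod_congr rfl fun i _ => by simp

lemma ringHom_eq_eval₂Hom {σ R S : Type*} [CommSemiring R] [CommSemiring S]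
    (f : MvPolynomial σ R →+* S) :
    eval₂Hom (f.comp MvPolynomial.C) (fun i => f (MvPolynomial.X i)) = f :=
  MvPolynomial.ringHom_ext (fun a => by simp) (fun i => by simp)

/-- In the quotient by `relIdeal`, the elementary symmetric functions of the variables take
the prescribed values. -/
lemma relIdeal_esymm_eq {R : Type*} [CommRing R] {n : ℕ} (f : R[X]) (i : Fin n) :
    (Finset.univ.val.map fun j =>
        Ideal.Quotient.mk (relIdeal R n f) (MvPolynomial.X j)).esymm (i.1 + 1)
      = ((Ideal.Quotient.mk (relIdeal R n f)).comp MvPolynomial.C)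
          ((-1) ^ (i.1 + 1) * f.coeff (n - (i.1 + 1))) := by
  classical
  set mk := Ideal.Quotient.mk (relIdeal R n f)
  have hmem : MvPolynomial.esymm (Fin n) R (i.1 + 1)
      - MvPolynomial.C ((-1) ^ (i.1 + 1) * f.coeff (n - (i.1 + 1))) ∈ relIdeal R n f :=
    Ideal.subset_span ⟨i, rfl⟩
  have h0 := Ideal.Quotient.eq_zero_iff_mem.mpr hmem
  rw [map_sub, sub_eq_zero] at h0
  have h1 := ringHom_eq_eval₂Hom (mk : MvPolynomial (Fin n) R →+* _)
  have h2 : mk (MvPolynomial.esymm (Fin n) R (i.1 + 1))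
      = (Finset.univ.val.map fun j => mk (MvPolynomial.X j)).esymm (i.1 + 1) := by
    conv_lhs => rw [← h1]
    rw [eval₂Hom_esymm]
  rw [← h2, h0]
  rfl

/-- In the quotient by `relIdeal`, `f` splits as `∏ (X - tᵢ)`. -/
lemma relIdeal_prod_eq {R : Type*} [CommRing R] {n : ℕ} {f : R[X]}
    (hf : f.Monic) (hdeg : f.natDegree = n) :
    (∏ i : Fin n, (Polynomial.X
        - Polynomial.C (Ideal.Quotient.mk (relIdeal R n f) (MvPolynomial.X i))))
      = f.map ((Ideal.Quotient.mk (relIdeal R n f)).comp MvPolynomial.C) := by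
  refine (prod_X_sub_C_eq_map_iff _ f hf hdeg _).mpr fun i => ?_
  rw [relIdeal_esymm_eq f i, map_mul, map_pow, map_neg, map_one]

/-- Any module over a trivial ring has a basis with any index type. -/
noncomputable def subsingletonBasis {R M : Type*} [CommRing R] [AddCommGroup M] [Module R M]
    [Subsingleton R] (ι : Type*) : Module.Basis ι R M := by
  haveI := Module.subsingleton R M
  haveI : Subsingleton (ι →₀ R) := ⟨fun a b => Finsupp.ext fun i => Subsingleton.elim _ _⟩
  exact Module.Basis.ofRepr
    { toFun := fun _ => 0
      invFun := fun _ => 0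
      map_add' := fun _ _ => (Subsingleton.elim _ _)
      map_smul' := fun _ _ => (Subsingleton.elim _ _)
      left_inv := fun x => Subsingleton.elim _ _
      right_inv := fun x => Subsingleton.elim _ _ }

set_option maxHeartbeats 2000000 in
/-- Main induction: the coordinate ring of `Flag_f` has an `R`-basis of cardinality `n!`. -/
theorem relIdeal_quotient_basis (n : ℕ) :
    ∀ (R : Type u) [CommRing R] (f : R[X]), f.Monic → f.natDegree = n →
      Nonempty (Module.Basis (Fin (Nat.factorial n)) R (MvPolynomial (Fin n) R ⧸ relIdeal R n f)) := by
  induction n with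
  | zero =>
    intro R _ f hf hdeg
    have hbot : relIdeal R 0 f = ⊥ := by
      rw [relIdeal, Set.range_eq_empty, Ideal.span_empty]
    have hinj : Function.Injective (Ideal.Quotient.mkₐ R (relIdeal R 0 f)) := by
      intro x y hxy
      have := Ideal.Quotient.mk_eq_mk_iff_sub_mem (I := relIdeal R 0 f) x y |>.mp hxy
      rw [hbot] at this
      simpa [sub_eq_zero] using this
    have hsurj : Function.Surjective (Ideal.Quotient.mkₐ R (relIdeal R 0 f)) :=
      Ideal.Quotient.mk_surjective
    let e : MvPolynomial (Fin 0) R ≃ₐ[R] (MvPolynomial (Fin 0) R ⧸ relIdeal R 0 f) :=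
      AlgEquiv.ofBijective _ ⟨hinj, hsurj⟩
    let e2 : R ≃ₗ[R] (MvPolynomial (Fin 0) R ⧸ relIdeal R 0 f) :=
      ((MvPolynomial.isEmptyAlgEquiv R (Fin 0)).symm.trans e).toLinearEquiv
    exact ⟨((Module.Basis.singleton (Fin 1) R).map e2).reindex (finCongr (by simp))⟩
  | succ n ih =>
    intro R _ f hf hdeg
    rcases subsingleton_or_nontrivial R with hR | hR
    · exact ⟨subsingletonBasis _⟩
    classical
    -- the ring `A = R[x]/(f)` and the quotient `g` of `f` by `X - x`
    set A := AdjoinRoot f with hA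
    set r : A := AdjoinRoot.root f with hr
    have hfA : (f.map (AdjoinRoot.of f)).Monic := hf.map _
    have hroot : IsRoot (f.map (AdjoinRoot.of f)) r := AdjoinRoot.isRoot_root f
    set g : A[X] := f.map (AdjoinRoot.of f) /ₘ (Polynomial.X - Polynomial.C r) with hgdef
    have hfg : (Polynomial.X - Polynomial.C r) * g = f.map (AdjoinRoot.of f) :=
      (mul_divByMonic_eq_iff_isRoot).mpr hroot
    have bA : Module.Basis (Fin f.natDegree) R A := AdjoinRoot.powerBasisAux' hf
    haveI : Nontrivial (Fin f.natDegree →₀ R) := by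
      refine ⟨⟨Finsupp.single ⟨0, by omega⟩ 1, 0, fun h => ?_⟩⟩
      have := DFunLike.congr_fun h (⟨0, by omega⟩ : Fin f.natDegree)
      simpa using this
    haveI : Nontrivial A := bA.repr.toEquiv.nontrivial
    have hg : g.Monic := (monic_X_sub_C r).of_mul_monic_left (by rw [hfg]; exact hfA)
    have hgdeg : g.natDegree = n := by
      have h1 : (f.map (AdjoinRoot.of f)).natDegree = n + 1 := by
        rw [hf.natDegree_map]; exact hdeg
      have h2 := (monic_X_sub_C r).natDegree_mul hg
      rw [hfg, h1, natDegree_X_sub_C] at h2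
      omega
    obtain ⟨bB⟩ := ih A g hg hgdeg
    -- notation for the two quotients
    set IP := relIdeal R (n + 1) f with hIP
    set IB := relIdeal A n g with hIB
    set mkP : MvPolynomial (Fin (n + 1)) R →+* _ := Ideal.Quotient.mk IP with hmkP
    set mkB : MvPolynomial (Fin n) A →+* _ := Ideal.Quotient.mk IB with hmkB
    set sbar : Fin (n + 1) → (MvPolynomial (Fin (n + 1)) R ⧸ IP) :=
      fun i => mkP (MvPolynomial.X i) with hsbar
    set tbar : Fin n → (MvPolynomial (Fin n) A ⧸ IB) :=
      fun i => mkB (MvPolynomial.X i) with htbar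
    set φP : R →+* (MvPolynomial (Fin (n + 1)) R ⧸ IP) := mkP.comp MvPolynomial.C with hφP
    set φB : A →+* (MvPolynomial (Fin n) A ⧸ IB) := mkB.comp MvPolynomial.C with hφB
    have hP : (∏ i : Fin (n + 1), (Polynomial.X - Polynomial.C (sbar i))) = f.map φP :=
      relIdeal_prod_eq hf hdeg
    have hB : (∏ i : Fin n, (Polynomial.X - Polynomial.C (tbar i))) = g.map φB :=
      relIdeal_prod_eq hg hgdeg
    -- the forward algebra map `Φ : P →ₐ[R] B`
    have hχ : φB.comp (AdjoinRoot.of f) = algebraMap R (MvPolynomial (Fin n) A ⧸ IB) := rfl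
    have hφBalg : (φB : A → _) = algebraMap A (MvPolynomial (Fin n) A ⧸ IB) := rfl
    set u : Fin (n + 1) → (MvPolynomial (Fin n) A ⧸ IB) :=
      Fin.cases (φB r) tbar with hu
    have hprodB : (∏ i : Fin (n + 1), (Polynomial.X - Polynomial.C (u i)))
        = f.map (algebraMap R (MvPolynomial (Fin n) A ⧸ IB)) := by
      rw [Fin.prod_univ_succ]
      have h1 : ∀ i : Fin n, u i.succ = tbar i := fun i => by simp [hu]
      have h0 : u 0 = φB r := by simp [hu]
      calc (Polynomial.X - Polynomial.C (u 0))
            * ∏ i : Fin n, (Polynomial.X - Polynomial.C (u i.succ))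
          = (Polynomial.X - Polynomial.C (φB r)) * (g.map φB) := by
            have h1' : (∏ i : Fin n, (Polynomial.X - Polynomial.C (u i.succ)))
                = ∏ i : Fin n, (Polynomial.X - Polynomial.C (tbar i)) :=
              Finset.prod_congr rfl fun i _ => by rw [h1]
            rw [h0, h1', hB]
        _ = ((Polynomial.X - Polynomial.C r) * g).map φB := by
            rw [Polynomial.map_mul, Polynomial.map_sub, Polynomial.map_X, Polynomial.map_C]
        _ = (f.map (AdjoinRoot.of f)).map φB := by rw [hfg]
        _ = f.map (algebraMap R (MvPolynomial (Fin n) A ⧸ IB)) := by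
            rw [Polynomial.map_map, hχ]
    have hrelB := (prod_X_sub_C_eq_map_iff u f hf hdeg _).mp hprodB
    set Φ0 : MvPolynomial (Fin (n + 1)) R →ₐ[R] (MvPolynomial (Fin n) A ⧸ IB) :=
      MvPolynomial.aeval u with hΦ0
    have hker : ∀ p ∈ IP, Φ0 p = 0 := by
      intro p hp
      have hle : IP ≤ RingHom.ker Φ0.toRingHom := by
        rw [hIP, relIdeal]
        refine Ideal.span_le.mpr ?_
        rintro _ ⟨i, rfl⟩
        simp only [SetLike.mem_coe]
        have he : Φ0 (MvPolynomial.esymm (Fin (n + 1)) R (i.1 + 1))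
            = (Finset.univ.val.map u).esymm (i.1 + 1) := by
          rw [hΦ0, MvPolynomial.aeval_esymm_eq_multiset_esymm]
        rw [RingHom.mem_ker]
        show Φ0 (MvPolynomial.esymm (Fin (n + 1)) R (i.1 + 1)
          - MvPolynomial.C ((-1) ^ (i.1 + 1) * f.coeff (n + 1 - (i.1 + 1)))) = 0
        rw [map_sub, he, hrelB i]
        have hc : Φ0 (MvPolynomial.C ((-1) ^ (i.1 + 1) * f.coeff (n + 1 - (i.1 + 1))))
            = algebraMap R _ ((-1) ^ (i.1 + 1) * f.coeff (n + 1 - (i.1 + 1))) :=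
          MvPolynomial.aeval_C _ _
        rw [hc]
        simp
      exact hle hp
    set Φ : (MvPolynomial (Fin (n + 1)) R ⧸ IP) →ₐ[R] (MvPolynomial (Fin n) A ⧸ IB) :=
      Ideal.Quotient.liftₐ IP Φ0 hker with hΦ
    -- the reverse map `Ψ`
    have h0 : (Polynomial.aeval (sbar 0)) f = 0 := by
      rw [Polynomial.aeval_def, Polynomial.eval₂_eq_eval_map]
      have halg : algebraMap R (MvPolynomial (Fin (n + 1)) R ⧸ IP) = φP := rfl
      rw [halg, ← hP, Polynomial.eval_prod]
      refine Finset.prod_eq_zero (Finset.mem_univ 0) ?_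
      simp
    set ψ : A →ₐ[R] (MvPolynomial (Fin (n + 1)) R ⧸ IP) :=
      AdjoinRoot.liftAlgHom f (Algebra.ofId R _) (sbar 0) h0 with hψ
    have hψr : ψ r = sbar 0 := by
      show AdjoinRoot.liftAlgHom f (Algebra.ofId R _) (sbar 0) h0 (AdjoinRoot.root f) = sbar 0
      exact AdjoinRoot.liftAlgHom_root f _ _ h0
    set Ψ0 : MvPolynomial (Fin n) A →+* (MvPolynomial (Fin (n + 1)) R ⧸ IP) :=
      eval₂Hom ψ.toRingHom (fun i => sbar i.succ) with hΨ0
    have hcompψ : ψ.toRingHom.comp (AdjoinRoot.of f)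
        = algebraMap R (MvPolynomial (Fin (n + 1)) R ⧸ IP) := by
      ext x
      show ψ (AdjoinRoot.of f x) = _
      rw [← AdjoinRoot.algebraMap_eq]
      exact ψ.commutes x
    have hfmap : f.map (algebraMap R (MvPolynomial (Fin (n + 1)) R ⧸ IP))
        = (f.map (AdjoinRoot.of f)).map ψ.toRingHom := by
      rw [Polynomial.map_map, hcompψ]
    have hcancel : (∏ i : Fin n, (Polynomial.X - Polynomial.C (sbar i.succ)))
        = g.map ψ.toRingHom := by
      apply (monic_X_sub_C (sbar 0)).isRegular.left
      show (Polynomial.X - Polynomial.C (sbar 0))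
          * (∏ i : Fin n, (Polynomial.X - Polynomial.C (sbar i.succ)))
        = (Polynomial.X - Polynomial.C (sbar 0)) * (g.map ψ.toRingHom)
      have hP' : (Polynomial.X - Polynomial.C (sbar 0))
          * ∏ i : Fin n, (Polynomial.X - Polynomial.C (sbar i.succ)) = f.map φP := by
        rw [← hP, Fin.prod_univ_succ]
      have halg : algebraMap R (MvPolynomial (Fin (n + 1)) R ⧸ IP) = φP := rfl
      have hψr' : ψ.toRingHom r = sbar 0 := hψr
      rw [hP', ← halg, hfmap, ← hfg, Polynomial.map_mul, Polynomial.map_sub,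
        Polynomial.map_X, Polynomial.map_C, hψr']
    have hrelP := (prod_X_sub_C_eq_map_iff (fun i => sbar i.succ) g hg hgdeg ψ.toRingHom).mp
      hcancel
    have hkerB : ∀ p ∈ IB, Ψ0 p = 0 := by
      intro p hp
      have hle : IB ≤ RingHom.ker Ψ0 := by
        rw [hIB, relIdeal]
        refine Ideal.span_le.mpr ?_
        rintro _ ⟨i, rfl⟩
        simp only [SetLike.mem_coe, RingHom.mem_ker, map_sub]
        rw [hΨ0, eval₂Hom_esymm, MvPolynomial.eval₂Hom_C, hrelP i, map_mul, map_pow,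
          map_neg, map_one, sub_self]
      exact hle hp
    set Ψ : (MvPolynomial (Fin n) A ⧸ IB) →+* (MvPolynomial (Fin (n + 1)) R ⧸ IP) :=
      Ideal.Quotient.lift IB Ψ0 hkerB with hΨdef
    -- the two composites are the identity
    set χB : A →ₐ[R] (MvPolynomial (Fin n) A ⧸ IB) :=
      { toRingHom := φB, commutes' := fun x => rfl } with hχB
    have hΦmk : ∀ p, Φ (mkP p) = Φ0 p := fun p => by
      rw [hΦ]
      exact (Ideal.Quotient.liftₐ_apply _ _ _ _).trans (Ideal.Quotient.lift_mk _ _ _)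
    have hΨmk : ∀ p, Ψ (mkB p) = Ψ0 p := fun p => rfl
    have h1 : Ψ.comp Φ.toRingHom = RingHom.id _ := by
      refine Ideal.Quotient.ringHom_ext (MvPolynomial.ringHom_ext (fun a => ?_) (fun i => ?_))
      · show Ψ (Φ (mkP (MvPolynomial.C a))) = mkP (MvPolynomial.C a)
        rw [hΦmk, hΦ0]
        rw [show (MvPolynomial.aeval u) (MvPolynomial.C a)
            = algebraMap R (MvPolynomial (Fin n) A ⧸ IB) a from MvPolynomial.aeval_C _ _]
        rw [← hχ]
        show Ψ (mkB (MvPolynomial.C (AdjoinRoot.of f a))) = _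
        rw [hΨmk, hΨ0]
        rw [MvPolynomial.eval₂Hom_C]
        show ψ (AdjoinRoot.of f a) = mkP (MvPolynomial.C a)
        rw [← AdjoinRoot.algebraMap_eq]
        rw [AlgHom.commutes]
        rfl
      · show Ψ (Φ (mkP (MvPolynomial.X i))) = mkP (MvPolynomial.X i)
        rw [hΦmk, hΦ0]
        induction i using Fin.cases with
        | zero =>
          rw [show (MvPolynomial.aeval u) (MvPolynomial.X 0) = u 0 from MvPolynomial.aeval_X _ _]
          have h0 : u 0 = φB r := by simp [hu]
          rw [h0]
          show Ψ (mkB (MvPolynomial.C r)) = _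
          rw [hΨmk, hΨ0, MvPolynomial.eval₂Hom_C]
          exact hψr
        | succ j =>
          rw [show (MvPolynomial.aeval u) (MvPolynomial.X j.succ) = u j.succ from
            MvPolynomial.aeval_X _ _]
          have h1 : u j.succ = tbar j := by simp [hu]
          rw [h1, htbar]
          show Ψ (mkB (MvPolynomial.X j)) = _
          rw [hΨmk, hΨ0, MvPolynomial.eval₂Hom_X']
    have h2 : Φ.toRingHom.comp Ψ = RingHom.id _ := by
      refine Ideal.Quotient.ringHom_ext (MvPolynomial.ringHom_ext (fun x => ?_) (fun i => ?_))
      · show Φ (Ψ (mkB (MvPolynomial.C x))) = mkB (MvPolynomial.C x)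
        rw [hΨmk, hΨ0, MvPolynomial.eval₂Hom_C]
        -- `Φ ∘ ψ` and the canonical map agree on `A` since they agree at the root
        have e1 : Φ.comp ψ = χB := by
          refine AdjoinRoot.algHom_ext ?_
          show Φ (ψ r) = χB r
          rw [hψr]
          have h2 : Φ (sbar 0) = u 0 := by
            show Φ (mkP (MvPolynomial.X 0)) = u 0
            rw [hΦmk, hΦ0]
            exact MvPolynomial.aeval_X _ _
          rw [h2]
          show u 0 = φB r
          simp [hu]
        have := AlgHom.congr_fun e1 x
        exact this
      · show Φ (Ψ (mkB (MvPolynomial.X i))) = mkB (MvPolynomial.X i)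
        rw [hΨmk, hΨ0, MvPolynomial.eval₂Hom_X']
        show Φ (mkP (MvPolynomial.X i.succ)) = _
        rw [hΦmk, hΦ0]
        rw [show (MvPolynomial.aeval u) (MvPolynomial.X i.succ) = u i.succ from
          MvPolynomial.aeval_X _ _]
        simp [hu, htbar]
    have hinj : Function.Injective Φ := fun x y hxy => by
      have := RingHom.congr_fun h1 x
      have h2' := RingHom.congr_fun h1 y
      simp only [RingHom.coe_comp, Function.comp_apply, RingHom.id_apply] at this h2'
      rw [← this, ← h2']
      exact congrArg Ψ hxy
    have hsurj : Function.Surjective Φ := fun b => ⟨Ψ b, by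
      have := RingHom.congr_fun h2 b
      simpa using this⟩
    let eqv : (MvPolynomial (Fin (n + 1)) R ⧸ IP) ≃ₐ[R] (MvPolynomial (Fin n) A ⧸ IB) :=
      AlgEquiv.ofBijective Φ ⟨hinj, hsurj⟩
    -- assemble bases
    let bA' : Module.Basis (Fin (n + 1)) R A := bA.reindex (finCongr hdeg)
    let bRB : Module.Basis (Fin (n + 1) × Fin (Nat.factorial n)) R (MvPolynomial (Fin n) A ⧸ IB) :=
      bA'.smulTower bB
    exact ⟨(bRB.map eqv.symm.toLinearEquiv).reindex
      (finProdFinEquiv.trans (finCongr (Nat.factorial_succ n).symm))⟩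

/-- For `f = tⁿ - a₁tⁿ⁻¹ + ⋯ + (-1)ⁿaₙ` monic of degree `n` over an
algebraically closed field `k`, the coordinate ring of `Flag_f`, namely
`k[t₁,…,tₙ]/(e₁ - a₁, …, eₙ - aₙ)`, is a free `k`-module of rank `n!`. -/
theorem flag_coordinate_ring_free_of_rank_factorial
    {k : Type*} [Field k] [IsAlgClosed k] {n : ℕ} (a : Fin n → k)
    (f : k[X]) (hf : f.Monic) (hdeg : f.natDegree = n)
    (hcoeff : ∀ i : Fin n, f.coeff (n - (i.1 + 1)) = (-1) ^ (i.1 + 1) * a i)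
    (I : Ideal (MvPolynomial (Fin n) k))
    (hI : I = Ideal.span
      (Set.range fun i : Fin n =>
        MvPolynomial.esymm (Fin n) k (i.1 + 1) - MvPolynomial.C (a i))) :
    Module.Free k (MvPolynomial (Fin n) k ⧸ I) ∧
      Module.rank k (MvPolynomial (Fin n) k ⧸ I) = Nat.factorial n := by
  have hfun : (fun i : Fin n => MvPolynomial.esymm (Fin n) k (i.1 + 1)
        - MvPolynomial.C (a i))
      = (fun i : Fin n => MvPolynomial.esymm (Fin n) k (i.1 + 1)
        - MvPolynomial.C ((-1) ^ (i.1 + 1) * f.coeff (n - (i.1 + 1)))) := by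
    funext i
    rw [hcoeff i, ← mul_assoc, ← pow_add, ← two_mul, pow_mul]
    simp
  have hIeq : I = relIdeal k n f := by
    rw [hI, relIdeal, hfun]
  subst hIeq
  obtain ⟨b⟩ := relIdeal_quotient_basis n k f hf hdeg
  constructor
  · exact Module.Free.of_basis b
  · rw [rank_eq_card_basis b]
    simp
end

section
/- Let $\kkk$ be an algebraically closed field, $f = t^n - a_1 t^{n-1} + \dots + (-1)^n a_n \in \kkk[t]$ monic of degree $n$. In the ring $B = \kkk[t_1,\dots,t_n]/(f(t_1),\dots,f(t_n))$, the ideal generated by the elements $(b - t_1)\cdots(b - t_n) - f(b)$ for all $b \in \kkk$ with $f(b) \ne 0$ equals the ideal generated by $e_i(t_1,\dots,t_n) - a_i$ for $1 \le i \le n$, where $e_i$ is the $i$-th elementary symmetric polynomial. -/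
open Polynomial MvPolynomial

lemma aux_prod_C_sub_X {k : Type} [CommRing k] (n : ℕ) (b : k) :
    (∏ i : Fin n, (MvPolynomial.C b - MvPolynomial.X i)) =
      ∑ j ∈ Finset.range (n + 1),
        (-1) ^ j * (MvPolynomial.esymm (Fin n) k j * MvPolynomial.C b ^ (n - j)) := by
  classical
  set s : Multiset (MvPolynomial (Fin n) k) :=
    Finset.univ.val.map fun i : Fin n => MvPolynomial.X i with hs
  have hcard : Multiset.card s = n := by simp [hs]
  have h := Multiset.prod_X_sub_X_eq_sum_esymm s
  rw [hcard] at h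
  have h2 := congrArg (Polynomial.eval (MvPolynomial.C b)) h
  simp only [Polynomial.eval_multiset_prod, hs, Multiset.map_map, Function.comp_def,
    Polynomial.eval_sub, Polynomial.eval_X, Polynomial.eval_C, Polynomial.eval_finset_sum,
    Polynomial.eval_mul, Polynomial.eval_pow, Polynomial.eval_neg, Polynomial.eval_one] at h2
  rw [MvPolynomial.esymm_eq_multiset_esymm, Finset.prod_eq_multiset_prod]
  exact h2

lemma aux_inv_combo {k R : Type*} [Field k] [CommRing R] {n : ℕ}
    (φ : k →+* R) (M : Matrix (Fin n) (Fin n) k) (hM : IsUnit M.det)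
    (d w : Fin n → R) (hw : ∀ m, w m = ∑ i, φ (M m i) * d i) (i : Fin n) :
    d i = ∑ m, φ (M⁻¹ i m) * w m := by
  have h1 : M⁻¹ * M = 1 := Matrix.nonsing_inv_mul M hM
  have h2 : ∑ m, φ (M⁻¹ i m) * w m = ∑ i', φ ((M⁻¹ * M) i i') * d i' := by
    simp only [hw, Finset.mul_sum, Matrix.mul_apply, map_sum, Finset.sum_mul]
    rw [Finset.sum_comm]
    refine Finset.sum_congr rfl fun i' _ => Finset.sum_congr rfl fun m _ => ?_
    rw [map_mul]; ring
  rw [h2, h1]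
  simp [Matrix.one_apply, apply_ite φ]

/-- Let `k` be algebraically closed and
`f = tⁿ - a₁tⁿ⁻¹ + ⋯ + (-1)ⁿaₙ` monic of degree `n`.  In
`B = k[t₁,…,tₙ]/(f(t₁),…,f(tₙ))`, the ideal generated by the elements
`(b - t₁)⋯(b - tₙ) - f(b)` for all `b` with `f(b) ≠ 0` equals the ideal
generated by the `eᵢ - aᵢ`, where `eᵢ` is the `i`-th elementary symmetric
polynomial. -/
theorem ideal_of_norm_relations_eq_ideal_of_esymm
    {k : Type} [Field k] [IsAlgClosed k] {n : ℕ} (a : Fin n → k)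
    (f : k[X]) (hf : f.Monic) (hdeg : f.natDegree = n)
    (hcoeff : ∀ i : Fin n, f.coeff (n - (i.1 + 1)) = (-1) ^ (i.1 + 1) * a i)
    (J : Ideal (MvPolynomial (Fin n) k))
    (hJ : J = Ideal.span
      (Set.range fun i : Fin n => Polynomial.aeval (MvPolynomial.X i) f)) :
    Ideal.span
        ((fun g => Ideal.Quotient.mk J g) ''
          {g | ∃ b : k, f.eval b ≠ 0 ∧
            g = (∏ i : Fin n, (MvPolynomial.C b - MvPolynomial.X i)) -
              MvPolynomial.C (f.eval b)}) =
      Ideal.span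
        ((fun g => Ideal.Quotient.mk J g) ''
          (Set.range fun i : Fin n =>
            MvPolynomial.esymm (Fin n) k (i.1 + 1) - MvPolynomial.C (a i))) := by
  classical
  set mk : MvPolynomial (Fin n) k →+* MvPolynomial (Fin n) k ⧸ J := Ideal.Quotient.mk J with hmk
  set φ : k →+* MvPolynomial (Fin n) k ⧸ J := mk.comp MvPolynomial.C with hφ
  -- the key polynomial identity
  have key : ∀ b : k,
      (∏ i : Fin n, (MvPolynomial.C b - MvPolynomial.X i)) - MvPolynomial.C (f.eval b)
        = ∑ j : Fin n, MvPolynomial.C ((-1 : k) ^ (j.1 + 1) * b ^ (n - (j.1 + 1))) *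
            (MvPolynomial.esymm (Fin n) k (j.1 + 1) - MvPolynomial.C (a j)) := by
    intro b
    have hB : f.eval b = ∑ j ∈ Finset.range (n + 1), f.coeff (n - j) * b ^ (n - j) := by
      have h0 := Polynomial.eval_eq_sum_range (p := f) b
      rw [hdeg] at h0
      rw [h0, ← Finset.sum_range_reflect]
      refine Finset.sum_congr rfl fun j hj => ?_
      congr 2 <;> omega
    have hH : ∀ j : Fin n,
        MvPolynomial.C ((-1 : k) ^ (j.1 + 1) * b ^ (n - (j.1 + 1))) *
            (MvPolynomial.esymm (Fin n) k (j.1 + 1) - MvPolynomial.C (a j))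
          = (-1) ^ (j.1 + 1) * (MvPolynomial.esymm (Fin n) k (j.1 + 1) *
              MvPolynomial.C b ^ (n - (j.1 + 1))) -
            MvPolynomial.C (f.coeff (n - (j.1 + 1)) * b ^ (n - (j.1 + 1))) := by
      intro j
      rw [hcoeff j]
      simp only [map_mul, map_pow, map_neg, map_one]
      ring
    calc (∏ i : Fin n, (MvPolynomial.C b - MvPolynomial.X i)) - MvPolynomial.C (f.eval b)
        = (∑ j ∈ Finset.range (n + 1),
              (-1) ^ j * (MvPolynomial.esymm (Fin n) k j * MvPolynomial.C b ^ (n - j)))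
          - ∑ j ∈ Finset.range (n + 1), MvPolynomial.C (f.coeff (n - j) * b ^ (n - j)) := by
          rw [aux_prod_C_sub_X n b, hB, map_sum]
      _ = ∑ j ∈ Finset.range (n + 1),
            ((-1) ^ j * (MvPolynomial.esymm (Fin n) k j * MvPolynomial.C b ^ (n - j)) -
              MvPolynomial.C (f.coeff (n - j) * b ^ (n - j))) := (Finset.sum_sub_distrib _ _).symm
      _ = ∑ j ∈ Finset.range n,
            ((-1) ^ (j + 1) * (MvPolynomial.esymm (Fin n) k (j + 1) *
                MvPolynomial.C b ^ (n - (j + 1))) -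
              MvPolynomial.C (f.coeff (n - (j + 1)) * b ^ (n - (j + 1)))) := by
          rw [Finset.sum_range_succ']
          have hc : f.coeff n = 1 := hdeg ▸ hf.coeff_natDegree
          simp [hc, MvPolynomial.esymm_zero, map_pow]
      _ = ∑ j : Fin n,
            ((-1) ^ (j.1 + 1) * (MvPolynomial.esymm (Fin n) k (j.1 + 1) *
                MvPolynomial.C b ^ (n - (j.1 + 1))) -
              MvPolynomial.C (f.coeff (n - (j.1 + 1)) * b ^ (n - (j.1 + 1)))) :=
          (Fin.sum_univ_eq_sum_range _ n).symm
      _ = _ := Finset.sum_congr rfl fun j _ => (hH j).symm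
  -- key identity, in the quotient, reindexed by Fin.rev
  have key2 : ∀ b : k,
      mk ((∏ i : Fin n, (MvPolynomial.C b - MvPolynomial.X i)) - MvPolynomial.C (f.eval b))
        = ∑ i : Fin n, φ ((-1 : k) ^ (n - i.1) * b ^ i.1) *
            mk (MvPolynomial.esymm (Fin n) k ((Fin.rev i).1 + 1) -
              MvPolynomial.C (a (Fin.rev i))) := by
    intro b
    rw [key b, map_sum]
    refine (Fintype.sum_bijective Fin.rev Fin.rev_bijective _ _ fun i => ?_).symm
    have hi : i.1 < n := i.2
    have hv : (Fin.rev i).1 = n - (i.1 + 1) := rfl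
    have e1 : n - (i.1 + 1) + 1 = n - i.1 := by omega
    have e2 : n - (n - (i.1 + 1) + 1) = i.1 := by omega
    rw [hv, e2, e1]
    simp [hφ, map_mul, mul_assoc]
  apply le_antisymm
  · rw [Ideal.span_le]
    rintro _ ⟨g, ⟨b, hb, rfl⟩, rfl⟩
    have := key2 b
    simp only [hmk] at this ⊢
    rw [this]
    refine Ideal.sum_mem _ fun i _ => Ideal.mul_mem_left _ _ ?_
    exact Ideal.subset_span ⟨_, ⟨Fin.rev i, rfl⟩, rfl⟩
  · rw [Ideal.span_le]
    rintro _ ⟨g, ⟨j, rfl⟩, rfl⟩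
    -- choose n distinct non-roots
    have hroots : {x : k | f.eval x = 0}.Finite := Polynomial.finite_setOf_isRoot hf.ne_zero
    have hinf : {x : k | f.eval x ≠ 0}.Infinite := hroots.infinite_compl
    set eb := hinf.natEmbedding with heb
    set b : Fin n → k := fun m => (eb m.1 : k) with hb
    have hbinj : Function.Injective b := fun m m' h =>
      Fin.val_injective (eb.injective (Subtype.coe_injective h))
    have hbne : ∀ m, f.eval (b m) ≠ 0 := fun m => (eb m.1).2
    set M : Matrix (Fin n) (Fin n) k :=
      Matrix.of fun m i : Fin n => (-1 : k) ^ (n - i.1) * b m ^ i.1 with hM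
    have hMdet : IsUnit M.det := by
      have hMeq : M = (Matrix.vandermonde b) *
          Matrix.diagonal (fun i : Fin n => (-1 : k) ^ (n - i.1)) := by
        ext m i
        rw [Matrix.mul_diagonal]
        simp [hM, Matrix.vandermonde]
        ring
      rw [hMeq, Matrix.det_mul, Matrix.det_diagonal]
      refine IsUnit.mul ?_ ?_
      · exact (Matrix.det_vandermonde_ne_zero_iff.mpr hbinj).isUnit
      · exact (Finset.prod_ne_zero_iff.mpr fun i _ =>
          pow_ne_zero _ (neg_ne_zero.mpr one_ne_zero)).isUnit
    set d : Fin n → MvPolynomial (Fin n) k ⧸ J := fun i =>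
      mk (MvPolynomial.esymm (Fin n) k ((Fin.rev i).1 + 1) -
        MvPolynomial.C (a (Fin.rev i))) with hd
    set w : Fin n → MvPolynomial (Fin n) k ⧸ J := fun m =>
      mk ((∏ i : Fin n, (MvPolynomial.C (b m) - MvPolynomial.X i)) -
        MvPolynomial.C (f.eval (b m))) with hw
    have hwd : ∀ m, w m = ∑ i, φ (M m i) * d i := fun m => key2 (b m)
    have hdS : ∀ i, d i ∈ Ideal.span
        ((fun g => Ideal.Quotient.mk J g) ''
          {g | ∃ b : k, f.eval b ≠ 0 ∧
            g = (∏ i : Fin n, (MvPolynomial.C b - MvPolynomial.X i)) -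
              MvPolynomial.C (f.eval b)}) := by
      intro i
      rw [aux_inv_combo φ M hMdet d w hwd i]
      refine Ideal.sum_mem _ fun m _ => Ideal.mul_mem_left _ _ ?_
      exact Ideal.subset_span ⟨_, ⟨b m, hbne m, rfl⟩, rfl⟩
    have hjj : d (Fin.rev j) = Ideal.Quotient.mk J
        (MvPolynomial.esymm (Fin n) k (j.1 + 1) - MvPolynomial.C (a j)) := by
      show mk (MvPolynomial.esymm (Fin n) k ((Fin.rev (Fin.rev j)).1 + 1) -
        MvPolynomial.C (a (Fin.rev (Fin.rev j)))) = _
      rw [Fin.rev_rev]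
    have hm := hdS (Fin.rev j)
    rw [hjj] at hm
    exact hm
end
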